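/- Let A and B be n×n positive definite Hermitian matrices. Then tr(A⁻¹ B) ≤ (1/(n-1)!) · (tr(B⁻¹ A))^{n-1} · det(B)/det(A). -/

import Mathlib

open Matrix ComplexOrder

open Finset in
lemma fact_mul_esymm_le {ι : Type*} [DecidableEq ι] (k : ℕ) (s : Finset ι) (y : ι → ℝ)
    (hy : ∀ i ∈ s, 0 ≤ y i) :
    (k.factorial : ℝ) * ∑ T ∈ s.powersetCard k, ∏ j ∈ T, y j ≤ (∑ j ∈ s, y j) ^ k := by
  induction k with
  | zero => simp
  | succ k ih =>
    have hsum : 0 ≤ ∑ j ∈ s, y j := Finset.sum_nonneg hy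
    have hprod : ∀ T ∈ s.powersetCard k, 0 ≤ ∏ j ∈ T, y j := by
      intro T hT
      exact Finset.prod_nonneg fun i hi => hy i ((Finset.mem_powersetCard.1 hT).1 hi)
    have key : ((k+1 : ℕ) : ℝ) * ∑ T ∈ s.powersetCard (k+1), ∏ j ∈ T, y j ≤
        (∑ T ∈ s.powersetCard k, ∏ j ∈ T, y j) * (∑ j ∈ s, y j) := by
      have e1 : ((k+1 : ℕ) : ℝ) * ∑ T ∈ s.powersetCard (k+1), ∏ j ∈ T, y j
          = ∑ T ∈ s.powersetCard (k+1), ∑ j ∈ T, ∏ i ∈ T, y i := by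
        rw [Finset.mul_sum]
        refine Finset.sum_congr rfl fun T hT => ?_
        rw [Finset.sum_const, (Finset.mem_powersetCard.1 hT).2, nsmul_eq_mul]
      have e2 : ∑ T ∈ s.powersetCard (k+1), ∑ j ∈ T, ∏ i ∈ T, y i
          = ∑ S ∈ s.powersetCard k, ∑ j ∈ s \ S, ∏ i ∈ insert j S, y i := by
        rw [Finset.sum_sigma', Finset.sum_sigma']
        refine Finset.sum_nbij' (fun p => ⟨p.1.erase p.2, p.2⟩)
          (fun p => ⟨insert p.2 p.1, p.2⟩) ?_ ?_ ?_ ?_ ?_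
        · rintro ⟨T, j⟩ hp
          rw [Finset.mem_sigma] at hp ⊢
          obtain ⟨hT, hj⟩ := hp
          rw [Finset.mem_powersetCard] at hT
          refine ⟨Finset.mem_powersetCard.2 ⟨(Finset.erase_subset _ _).trans hT.1, ?_⟩, ?_⟩
          · rw [Finset.card_erase_of_mem hj, hT.2]; rfl
          · exact Finset.mem_sdiff.2 ⟨hT.1 hj, Finset.notMem_erase _ _⟩
        · rintro ⟨S, j⟩ hp
          rw [Finset.mem_sigma] at hp ⊢
          obtain ⟨hS, hj⟩ := hp
          rw [Finset.mem_powersetCard] at hS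
          rw [Finset.mem_sdiff] at hj
          refine ⟨Finset.mem_powersetCard.2 ⟨?_, ?_⟩, Finset.mem_insert_self _ _⟩
          · exact Finset.insert_subset hj.1 hS.1
          · rw [Finset.card_insert_of_notMem hj.2, hS.2]
        · rintro ⟨T, j⟩ hp
          rw [Finset.mem_sigma] at hp
          simp [Finset.insert_erase hp.2]
        · rintro ⟨S, j⟩ hp
          rw [Finset.mem_sigma] at hp
          have := (Finset.mem_sdiff.1 hp.2).2
          simp [Finset.erase_insert this]
        · rintro ⟨T, j⟩ hp
          rw [Finset.mem_sigma] at hp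
          simp [Finset.insert_erase hp.2]
      have e3 : ∑ S ∈ s.powersetCard k, ∑ j ∈ s \ S, ∏ i ∈ insert j S, y i ≤
          (∑ S ∈ s.powersetCard k, ∏ j ∈ S, y j) * (∑ j ∈ s, y j) := by
        rw [Finset.sum_mul]
        refine Finset.sum_le_sum fun S hS => ?_
        have hSs := (Finset.mem_powersetCard.1 hS).1
        have : ∀ j ∈ s \ S, ∏ i ∈ insert j S, y i = y j * ∏ i ∈ S, y i := by
          intro j hj
          exact Finset.prod_insert (Finset.mem_sdiff.1 hj).2
        rw [Finset.sum_congr rfl this, ← Finset.sum_mul, mul_comm]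
        refine mul_le_mul_of_nonneg_left ?_ (hprod S hS)
        refine Finset.sum_le_sum_of_subset_of_nonneg (Finset.sdiff_subset) fun i hi _ => hy i hi
      rw [e1, e2]; exact e3
    calc ((k+1).factorial : ℝ) * ∑ T ∈ s.powersetCard (k+1), ∏ j ∈ T, y j
        = (k.factorial : ℝ) * (((k+1:ℕ):ℝ) * ∑ T ∈ s.powersetCard (k+1), ∏ j ∈ T, y j) := by
          rw [Nat.factorial_succ]; push_cast; ring
      _ ≤ (k.factorial : ℝ) * ((∑ T ∈ s.powersetCard k, ∏ j ∈ T, y j) * (∑ j ∈ s, y j)) := by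
          exact mul_le_mul_of_nonneg_left key (by positivity)
      _ = ((k.factorial : ℝ) * ∑ T ∈ s.powersetCard k, ∏ j ∈ T, y j) * (∑ j ∈ s, y j) := by ring
      _ ≤ (∑ j ∈ s, y j) ^ k * (∑ j ∈ s, y j) := mul_le_mul_of_nonneg_right ih hsum
      _ = (∑ j ∈ s, y j) ^ (k+1) := by ring

lemma scalar_ineq (n : ℕ) (hn : 1 ≤ n) (μ : Fin n → ℝ) (hμ : ∀ i, 0 < μ i) :
    ∑ i, μ i ≤ (1 / (n - 1).factorial : ℝ) * (∑ i, (μ i)⁻¹) ^ (n - 1) * ∏ i, μ i := by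
  classical
  have hp : 0 < ∏ i, μ i := Finset.prod_pos (fun i _ => hμ i)
  have hf : (0:ℝ) < (n-1).factorial := by exact_mod_cast Nat.factorial_pos _
  have h := fact_mul_esymm_le (n-1) (Finset.univ : Finset (Fin n)) (fun i => (μ i)⁻¹)
    (fun i _ => (inv_nonneg).2 (hμ i).le)
  have hE : ∑ T ∈ (Finset.univ : Finset (Fin n)).powersetCard (n-1), ∏ j ∈ T, (μ j)⁻¹
      = ∑ i, ∏ j ∈ Finset.univ.erase i, (μ j)⁻¹ := by
    refine (Finset.sum_bij (fun i _ => Finset.univ.erase i) ?_ ?_ ?_ ?_).symm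
    · intro i _
      rw [Finset.mem_powersetCard]
      refine ⟨Finset.subset_univ _, ?_⟩
      rw [Finset.card_erase_of_mem (Finset.mem_univ _), Finset.card_univ, Fintype.card_fin]
    · intro i _ j _ hij
      by_contra hne
      have hij' : Finset.univ.erase i = Finset.univ.erase j := hij
      have : i ∈ Finset.univ.erase j := Finset.mem_erase.2 ⟨hne, Finset.mem_univ _⟩
      rw [← hij'] at this
      exact (Finset.notMem_erase i _) this
    · intro T hT
      rw [Finset.mem_powersetCard] at hT
      have hc : Tᶜ.card = 1 := by
        rw [Finset.card_compl, hT.2, Fintype.card_fin]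
        omega
      obtain ⟨i, hi⟩ := Finset.card_eq_one.1 hc
      refine ⟨i, Finset.mem_univ i, ?_⟩
      have : T = {i}ᶜ := by rw [← hi, compl_compl]
      rw [this, Finset.compl_singleton]
    · intro i _; rfl
  have hE2 : ∑ i, ∏ j ∈ Finset.univ.erase i, (μ j)⁻¹ = (∑ i, μ i) / ∏ i, μ i := by
    rw [Finset.sum_div]
    refine Finset.sum_congr rfl fun i _ => ?_
    have hi : μ i * ∏ j ∈ Finset.univ.erase i, μ j = ∏ j, μ j :=
      Finset.mul_prod_erase Finset.univ μ (Finset.mem_univ i)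
    rw [Finset.prod_inv_distrib]
    rw [eq_div_iff (ne_of_gt hp), ← hi]
    have hpe : 0 < ∏ j ∈ Finset.univ.erase i, μ j :=
      Finset.prod_pos (fun j _ => hμ j)
    field_simp
  rw [hE, hE2] at h
  calc ∑ i, μ i
      = (1 / (n - 1).factorial : ℝ) *
        (((n-1).factorial : ℝ) * ((∑ i, μ i) / ∏ i, μ i)) * ∏ i, μ i := by
        field_simp
    _ ≤ (1 / (n - 1).factorial : ℝ) * (∑ i, (μ i)⁻¹) ^ (n - 1) * ∏ i, μ i := by
        have h1 : (0:ℝ) ≤ 1 / (n-1).factorial := by positivity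
        exact mul_le_mul_of_nonneg_right (mul_le_mul_of_nonneg_left h h1) hp.le

lemma posdef_conj {n : ℕ} {B : Matrix (Fin n) (Fin n) ℂ} (hB : B.PosDef)
    (C : Matrix (Fin n) (Fin n) ℂ) (hC : IsUnit C.det) : (Cᴴ * B * C).PosDef := by
  refine PosDef.of_dotProduct_mulVec_pos (isHermitian_conjTranspose_mul_mul C hB.1) fun x hx => ?_
  have hCx : C *ᵥ x ≠ 0 := by
    intro h
    have hinj := Matrix.mulVec_injective_iff_isUnit.2 (Matrix.isUnit_iff_isUnit_det C |>.2 hC)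
    exact hx (by simpa using hinj (h.trans (Matrix.mulVec_zero C).symm))
  have := hB.dotProduct_mulVec_pos hCx
  simpa only [star_mulVec, Matrix.mul_assoc, dotProduct_mulVec, vecMul_vecMul] using this


/-- The mixed trace/determinant inequality: for positive definite Hermitian matrices
`A`, `B`, `tr(A⁻¹B) ≤ (1/(n-1)!) (tr(B⁻¹A))^{n-1} det B / det A`.  (All the quantities
involved are real, so the inequality is stated for the real parts.) -/
theorem stmt_11 (n : ℕ) (hn : 1 ≤ n) (A B : Matrix (Fin n) (Fin n) ℂ)
    (hA : A.PosDef) (hB : B.PosDef) :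
    (A⁻¹ * B).trace.re ≤
      (1 / (n - 1).factorial : ℝ) * ((B⁻¹ * A).trace.re) ^ (n - 1) *
        (B.det.re / A.det.re) := by
  classical
  set S := (by open scoped MatrixOrder in exact CFC.sqrt A : Matrix (Fin n) (Fin n) ℂ) with hSdef
  have hSS : S * S = A := by
    open scoped MatrixOrder in exact CFC.sqrt_mul_sqrt_self A hA.posSemidef.nonneg
  have hSH : S.IsHermitian := by
    open scoped MatrixOrder in exact (CFC.sqrt_nonneg A).posSemidef.1
  have hSdet : IsUnit S.det := by
    rw [isUnit_iff_ne_zero]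
    intro h
    have : A.det = 0 := by rw [← hSS, det_mul, h, mul_zero]
    exact hA.det_pos.ne' this
  set M := S⁻¹ * B * S⁻¹ with hMdef
  have hSiH : (S⁻¹).IsHermitian := hSH.inv
  have hM : M.PosDef := by
    have := posdef_conj hB S⁻¹ (isUnit_nonsing_inv_det S hSdet)
    rwa [hSiH.eq] at this
  have hAinv : A⁻¹ = S⁻¹ * S⁻¹ := by rw [← hSS, Matrix.mul_inv_rev]
  have t1 : (A⁻¹ * B).trace = M.trace := by
    rw [hAinv, hMdef, Matrix.trace_mul_cycle S⁻¹ B S⁻¹]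
  have hMinv : M⁻¹ = S * B⁻¹ * S := by
    rw [hMdef, Matrix.mul_inv_rev, Matrix.mul_inv_rev, nonsing_inv_nonsing_inv S hSdet,
      Matrix.mul_assoc]
  have t2 : (B⁻¹ * A).trace = M⁻¹.trace := by
    rw [hMinv, ← hSS, Matrix.trace_mul_cycle S B⁻¹ S, Matrix.mul_assoc,
      Matrix.trace_mul_comm, Matrix.mul_assoc]
  have hSd : S.det ≠ 0 := by
    simpa [isUnit_iff_ne_zero] using hSdet
  have t3 : A.det * M.det = B.det := by
    rw [hMdef, det_mul, det_mul, det_nonsing_inv, Ring.inverse_eq_inv, ← hSS, det_mul]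
    field_simp
  set μ := hM.isHermitian.eigenvalues with hμdef
  have hμpos : ∀ i, 0 < μ i := fun i => hM.eigenvalues_pos i
  set U : Matrix (Fin n) (Fin n) ℂ := (hM.isHermitian.eigenvectorUnitary : Matrix (Fin n) (Fin n) ℂ) with hUdef
  have hU2 : star U * U = 1 := mem_unitaryGroup_iff'.mp hM.isHermitian.eigenvectorUnitary.2
  have hspec : M = U * diagonal (RCLike.ofReal ∘ μ) * star U := hM.isHermitian.spectral_theorem
  have htrM : M.trace = ((∑ i, μ i : ℝ) : ℂ) := by
    rw [hspec, Matrix.trace_mul_cycle, hU2, one_mul, trace_diagonal]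
    push_cast
    rfl
  have hMinvdiag : M⁻¹ = U * diagonal (RCLike.ofReal ∘ fun i => (μ i)⁻¹) * star U := by
    apply inv_eq_right_inv
    have hU1 : U * star U = 1 := mem_unitaryGroup_iff.mp hM.isHermitian.eigenvectorUnitary.2
    have key : ∀ (D D' : Matrix (Fin n) (Fin n) ℂ),
        (U * D * star U) * (U * D' * star U) = U * (D * D') * star U := by
      intro D D'
      calc (U * D * star U) * (U * D' * star U)
          = U * (D * ((star U * U) * (D' * star U))) := by simp only [Matrix.mul_assoc]
        _ = U * (D * D') * star U := by
            rw [hU2]; simp only [Matrix.one_mul, Matrix.mul_assoc]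
    rw [hspec, key, diagonal_mul_diagonal]
    have : (fun i => (RCLike.ofReal ∘ μ) i * (RCLike.ofReal ∘ fun i => (μ i)⁻¹) i)
        = (fun _ : Fin n => (1:ℂ)) := by
      funext i
      simp only [Function.comp_apply]
      rw [← RCLike.ofReal_mul, mul_inv_cancel₀ (hμpos i).ne']
      simp
    rw [this, diagonal_one, Matrix.mul_one, hU1]
  have htrMinv : M⁻¹.trace = ((∑ i, (μ i)⁻¹ : ℝ) : ℂ) := by
    rw [hMinvdiag, Matrix.trace_mul_cycle, hU2, one_mul, trace_diagonal]
    simp only [Function.comp_apply]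
    push_cast
    rfl
  have hdetM : M.det = ((∏ i, μ i : ℝ) : ℂ) := by
    rw [hM.isHermitian.det_eq_prod_eigenvalues]
    push_cast
    rfl
  have hAim : A.det.im = 0 := ((Complex.lt_def.1 hA.det_pos).2).symm
  have hAre : 0 < A.det.re := by simpa using (Complex.lt_def.1 hA.det_pos).1
  have hBre : B.det.re = A.det.re * ∏ i, μ i := by
    rw [← t3, Complex.mul_re, hAim, hdetM, Complex.ofReal_re, Complex.ofReal_im]
    simp
  have e1 : (A⁻¹ * B).trace.re = ∑ i, μ i := by rw [t1, htrM, Complex.ofReal_re]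
  have e2 : (B⁻¹ * A).trace.re = ∑ i, (μ i)⁻¹ := by rw [t2, htrMinv, Complex.ofReal_re]
  have e3 : B.det.re / A.det.re = ∏ i, μ i := by
    rw [hBre, mul_comm, mul_div_assoc, div_self hAre.ne', mul_one]
  rw [e1, e2, e3]
  exact scalar_ineq n hn μ hμpos
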